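/- Firing probability after fewer than m failures (supercritical case): Let μ ∈ (0,1), w > 0, γ = w/(1−μ) with γ ≥ 1, and let v : {1,…,N} → ℝ satisfy v(1) = 0 and (1 − μ^{i−1})·γ ≤ v(i) ≤ γ for all i. Let k ∈ ℕ be such that μ^k γ ≥ 1. Then η ≤ (1/N) Σ_{i=1}^{N} φ(μ^k v(i)) ≤ θ, where θ = φ(γ)(1 − 1/N) = 1 − 1/N and η = φ(γ)(1 − (1/N)(1−μ^N)/(1−μ)) = 1 − (1/N)(1−μ^N)/(1−μ). (Here μ^k v is the potential vector after k consecutive non-firing (leakage) steps starting from v.) -/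
import Mathlib


/-- The firing probability function: `φ(u) = min(u,1)` for `u ≥ 0` and
`φ(u) = 0` for `u ≤ 0`. -/
noncomputable def phi (u : ℝ) : ℝ := min (max u 0) 1

/-- Firing probability after fewer than `m` failures
(supercritical case).  Let `γ = w/(1−μ) ≥ 1`, let `v : Fin N → ℝ` (0-based)
satisfy `v 0 = 0` and `(1 − μ^i) γ ≤ v i ≤ γ` for all `i`, and let `k ∈ ℕ` with
`μ^k γ ≥ 1`.  Then `1 − (1/N)(1−μ^N)/(1−μ) ≤ (1/N) Σ_i φ(μ^k v i) ≤ 1 − 1/N`;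
these are the bounds `η = φ(γ)(1 − (1/N)(1−μ^N)/(1−μ))` and
`θ = φ(γ)(1 − 1/N)` since `φ(γ) = 1` when `γ ≥ 1`. -/
theorem firing_prob_before_m_failures (N : ℕ) (hN : 2 ≤ N) (μ w : ℝ)
    (hμ0 : 0 < μ) (hμ1 : μ < 1) (hw : 0 < w)
    (hγ : 1 ≤ w / (1 - μ))
    (v : Fin N → ℝ)
    (hv0 : v ⟨0, by omega⟩ = 0)
    (hv : ∀ i : Fin N,
      (1 - μ ^ (i : ℕ)) * (w / (1 - μ)) ≤ v i ∧ v i ≤ w / (1 - μ))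
    (k : ℕ) (hk : 1 ≤ μ ^ k * (w / (1 - μ))) :
    1 - (1 / (N : ℝ)) * (1 - μ ^ N) / (1 - μ)
        ≤ (1 / (N : ℝ)) * ∑ i, phi (μ ^ k * v i) ∧
    (1 / (N : ℝ)) * ∑ i, phi (μ ^ k * v i) ≤ 1 - 1 / (N : ℝ) := by
  have hμd : 0 < 1 - μ := by linarith
  have hNpos : (0:ℝ) < N := by exact_mod_cast Nat.lt_of_lt_of_le (by norm_num) hN
  have hNne : (N:ℝ) ≠ 0 := ne_of_gt hNpos
  constructor
  · -- lower bound
    have hle : ∀ i : Fin N, 1 - μ ^ (i : ℕ) ≤ phi (μ ^ k * v i) := by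
      intro i
      have h2 := (hv i).1
      have hμi0 : (0:ℝ) ≤ μ ^ (i:ℕ) := pow_nonneg hμ0.le _
      have hμi1 : μ ^ (i:ℕ) ≤ 1 := pow_le_one₀ hμ0.le hμ1.le
      have h1 : 1 - μ ^ (i:ℕ) ≤ μ ^ k * v i := by
        calc 1 - μ ^ (i:ℕ) = (1 - μ ^ (i:ℕ)) * 1 := by ring
          _ ≤ (1 - μ ^ (i:ℕ)) * (μ ^ k * (w / (1 - μ))) :=
              mul_le_mul_of_nonneg_left hk (by linarith)
          _ = μ ^ k * ((1 - μ ^ (i:ℕ)) * (w / (1 - μ))) := by ring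
          _ ≤ μ ^ k * v i := mul_le_mul_of_nonneg_left h2 (pow_nonneg hμ0.le k)
      unfold phi
      exact le_min (le_trans h1 (le_max_left _ _)) (by linarith)
    have hsum : ∑ i : Fin N, (1 - μ ^ (i:ℕ)) ≤ ∑ i, phi (μ ^ k * v i) :=
      Finset.sum_le_sum fun i _ => hle i
    have hgeom : ∑ i : Fin N, (1 - μ ^ (i:ℕ)) = N - (1 - μ ^ N) / (1 - μ) := by
      rw [Fin.sum_univ_eq_sum_range (fun i => 1 - μ ^ i)]
      rw [Finset.sum_sub_distrib, Finset.sum_const, Finset.card_range,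
        geom_sum_eq (ne_of_lt hμ1)]
      have e : (μ ^ N - 1) / (μ - 1) = (1 - μ ^ N) / (1 - μ) := by
        rw [div_eq_div_iff (by linarith) (by linarith)]; ring
      rw [e]
      simp
    rw [hgeom] at hsum
    have h := mul_le_mul_of_nonneg_left hsum (one_div_pos.mpr hNpos).le
    have e2 : 1/(N:ℝ) * ((N:ℝ) - (1 - μ ^ N)/(1 - μ))
        = 1 - 1/(N:ℝ) * (1 - μ ^ N) / (1 - μ) := by
      rw [mul_sub, one_div_mul_cancel hNne, mul_div_assoc']
    linarith
  · -- upper bound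
    have hle : ∀ i : Fin N,
        phi (μ ^ k * v i) ≤ 1 - (if i = (⟨0, by omega⟩ : Fin N) then 1 else 0) := by
      intro i
      by_cases h : i = (⟨0, by omega⟩ : Fin N)
      · subst h
        simp [phi, hv0]
      · simp only [h, if_false, sub_zero]
        exact min_le_right (max (μ ^ k * v i) 0) 1
    have hsum : ∑ i, phi (μ ^ k * v i) ≤ (N:ℝ) - 1 := by
      calc ∑ i, phi (μ ^ k * v i)
          ≤ ∑ i : Fin N, (1 - (if i = (⟨0, by omega⟩ : Fin N) then 1 else 0)) :=
            Finset.sum_le_sum fun i _ => hle i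
        _ = (N:ℝ) - 1 := by
            rw [Finset.sum_sub_distrib, Finset.sum_const, Finset.sum_ite_eq']
            simp
    have h1N : (0:ℝ) < 1 / N := one_div_pos.mpr hNpos
    have := mul_le_mul_of_nonneg_left hsum h1N.le
    calc (1 / (N : ℝ)) * ∑ i, phi (μ ^ k * v i) ≤ (1/(N:ℝ)) * ((N:ℝ) - 1) := this
      _ = 1 - 1/(N:ℝ) := by field_simp
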